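/- Let (X,f) be a topological dynamical system. Then every minimal quasi-section is contained in M_f, the closure of the union of all minimal sets. -/

import Mathlib

open Set

/-- The full orbit `{fⁿ(x) : n ∈ ℤ}` of a point under a homeomorphism. -/
def orbitZ {X : Type*} [TopologicalSpace X] (f : X ≃ₜ X) (x : X) : Set X :=
  {y | ∃ n : ℤ, (f.toEquiv ^ n) x = y}

/-- `O(A) = ⋃_{n ∈ ℤ} fⁿ(A)`. -/
def orbitSetZ {X : Type*} [TopologicalSpace X] (f : X ≃ₜ X) (A : Set X) : Set X :=
  ⋃ n : ℤ, (f.toEquiv ^ n) '' A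

/-- `O⁺(A) = ⋃_{n ≥ 0} fⁿ(A)`. -/
def orbitSetP {X : Type*} [TopologicalSpace X] (f : X ≃ₜ X) (A : Set X) : Set X :=
  ⋃ n : ℕ, (f.toEquiv ^ (n : ℤ)) '' A

/-- `O⁻(A) = ⋃_{n ≤ 0} fⁿ(A)`. -/
def orbitSetN {X : Type*} [TopologicalSpace X] (f : X ≃ₜ X) (A : Set X) : Set X :=
  ⋃ n : ℕ, (f.toEquiv ^ (-(n : ℤ))) '' A

/-- The ω-limit set of a point. -/
def omegaSet {X : Type*} [TopologicalSpace X] (f : X ≃ₜ X) (x : X) : Set X :=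
  ⋂ n : ℕ, closure {y | ∃ m : ℕ, n ≤ m ∧ (f.toEquiv ^ (m : ℤ)) x = y}

/-- The α-limit set of a point. -/
def alphaSet {X : Type*} [TopologicalSpace X] (f : X ≃ₜ X) (x : X) : Set X :=
  ⋂ n : ℕ, closure {y | ∃ m : ℕ, n ≤ m ∧ (f.toEquiv ^ (-(m : ℤ))) x = y}

/-- A minimal set: nonempty, closed, invariant, and every orbit in it is dense in it. -/
def IsMinimalSet {X : Type*} [TopologicalSpace X] (f : X ≃ₜ X) (M : Set X) : Prop :=
  M.Nonempty ∧ IsClosed M ∧ f '' M = M ∧ ∀ x ∈ M, M ⊆ closure (orbitZ f x)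

/-- `M_f`: the closure of the union of all minimal sets. -/
def minimalUnion {X : Type*} [TopologicalSpace X] (f : X ≃ₜ X) : Set X :=
  closure (⋃₀ {M | IsMinimalSet f M})

/-- A wandering point. -/
def IsWandering {X : Type*} [TopologicalSpace X] (f : X ≃ₜ X) (x : X) : Prop :=
  ∃ U : Set X, IsOpen U ∧ x ∈ U ∧ ∀ n : ℤ, n ≠ 0 → (f.toEquiv ^ n) '' U ∩ U = ∅

/-- `Ω_f`: the set of non-wandering points. -/
def nonWandering {X : Type*} [TopologicalSpace X] (f : X ≃ₜ X) : Set X :=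
  {x | ¬ IsWandering f x}

/-- A quasi-section: a closed set every open neighborhood of which has full orbit. -/
def IsQuasiSection {X : Type*} [TopologicalSpace X] (f : X ≃ₜ X) (A : Set X) : Prop :=
  IsClosed A ∧ ∀ U : Set X, IsOpen U → A ⊆ U → orbitSetZ f U = Set.univ

/-- A minimal quasi-section (minimal w.r.t. inclusion among quasi-sections). -/
def IsMinimalQuasiSection {X : Type*} [TopologicalSpace X] (f : X ≃ₜ X) (A : Set X) : Prop :=
  IsQuasiSection f A ∧ ∀ B : Set X, IsQuasiSection f B → B ⊆ A → B = A

/-- A basic set: a quasi-section meeting every orbit in at most one point. -/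
def IsBasicSet {X : Type*} [TopologicalSpace X] (f : X ≃ₜ X) (A : Set X) : Prop :=
  IsQuasiSection f A ∧ ∀ x : X, (orbitZ f x ∩ A).Subsingleton

/-- A minimal basic set (minimal w.r.t. inclusion among basic sets). -/
def IsMinimalBasicSet {X : Type*} [TopologicalSpace X] (f : X ≃ₜ X) (A : Set X) : Prop :=
  IsBasicSet f A ∧ ∀ B : Set X, IsBasicSet f B → B ⊆ A → B = A

/-- Densely aperiodic: the points with infinite orbit are dense. -/
def DenselyAperiodic {X : Type*} [TopologicalSpace X] (f : X ≃ₜ X) : Prop :=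
  Dense {x : X | (orbitZ f x).Infinite}

section Helpers

set_option linter.unusedSectionVars false

variable {X : Type*} [TopologicalSpace X] [CompactSpace X] (f : X ≃ₜ X)

lemma zpow_image_eq {M : Set X} (h : f '' M = M) : ∀ n : ℤ, (f.toEquiv ^ n) '' M = M := by
  have h' : f.toEquiv '' M = M := by simpa using h
  have hs : f.toEquiv.symm '' M = M := by
    conv_lhs => rw [← h']
    rw [Equiv.symm_image_image]
  intro n
  induction n using Int.induction_on with
  | zero => simp
  | succ k ih => rw [zpow_add_one, Equiv.Perm.coe_mul, Set.image_comp, h', ih]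
  | pred k ih =>
    rw [sub_eq_add_neg, zpow_add, Equiv.Perm.coe_mul, Set.image_comp]
    have : ⇑(f.toEquiv ^ (-1 : ℤ)) = ⇑f.toEquiv.symm := by
      rw [zpow_neg, zpow_one]; rfl
    rw [this, hs, ih]

lemma orbitZ_invariant (y : X) : f '' orbitZ f y = orbitZ f y := by
  ext z
  constructor
  · rintro ⟨w, ⟨n, rfl⟩, rfl⟩
    refine ⟨n + 1, ?_⟩
    rw [add_comm, zpow_add, zpow_one, Equiv.Perm.mul_apply]
    rfl
  · rintro ⟨n, rfl⟩
    refine ⟨(f.toEquiv ^ (n - 1)) y, ⟨n - 1, rfl⟩, ?_⟩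
    have : (f.toEquiv ^ n) y = (f.toEquiv ^ (1 + (n-1))) y := by ring_nf
    rw [this, zpow_add, zpow_one, Equiv.Perm.mul_apply]
    rfl

lemma exists_minimal_subset (C : Set X) (hne : C.Nonempty) (hcl : IsClosed C)
    (hinv : f '' C = C) : ∃ M ⊆ C, IsMinimalSet f M := by
  set S : Set (Set X) := {N | N ⊆ C ∧ N.Nonempty ∧ IsClosed N ∧ f '' N = N} with hS
  have hzorn : ∀ c ⊆ S, IsChain (· ⊆ ·) c → c.Nonempty → ∃ lb ∈ S, ∀ s ∈ c, lb ⊆ s := by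
    rintro c hcS hchain ⟨N₀, hN₀⟩
    refine ⟨⋂₀ c, ⟨?_, ?_, ?_, ?_⟩, fun s hs => sInter_subset_of_mem hs⟩
    · exact (sInter_subset_of_mem hN₀).trans (hcS hN₀).1
    · have : Nonempty c := ⟨⟨N₀, hN₀⟩⟩
      apply IsCompact.nonempty_sInter_of_directed_nonempty_isCompact_isClosed
      · intro a ha b hb
        rcases hchain.total ha hb with h | h
        · exact ⟨a, ha, Subset.rfl, h⟩
        · exact ⟨b, hb, h, Subset.rfl⟩
      · exact fun U hU => (hcS hU).2.1
      · exact fun U hU => (hcS hU).2.2.1.isCompact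
      · exact fun U hU => (hcS hU).2.2.1
    · exact isClosed_sInter fun U hU => (hcS hU).2.2.1
    · rw [← Homeomorph.preimage_symm, preimage_sInter, sInter_eq_biInter]
      refine iInter₂_congr fun N hN => ?_
      have h2 := (hcS hN).2.2.2
      rwa [← congrFun (Homeomorph.preimage_symm f) N] at h2
  obtain ⟨M, hMC, hMS, hMmin⟩ := zorn_superset_nonempty S hzorn C ⟨Subset.rfl, hne, hcl, hinv⟩
  refine ⟨M, hMC, hMS.2.1, hMS.2.2.1, hMS.2.2.2, ?_⟩
  intro x hxM
  set D := closure (orbitZ f x) with hD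
  have horb : orbitZ f x ⊆ M := by
    rintro _ ⟨n, rfl⟩
    rw [← zpow_image_eq f hMS.2.2.2 n]
    exact ⟨x, hxM, rfl⟩
  have hDM : D ⊆ M := hMS.2.2.1.closure_subset_iff.mpr horb
  have hDS : D ∈ S := by
    refine ⟨hDM.trans hMS.1, ⟨x, subset_closure ⟨0, by simp⟩⟩, isClosed_closure, ?_⟩
    rw [hD, f.image_closure, orbitZ_invariant]
  exact hMmin hDS hDM

end Helpers

theorem stmt4 {X : Type*} [TopologicalSpace X] [CompactSpace X] [T2Space X] [Nonempty X] (f : X ≃ₜ X)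
    (A : Set X) (hA : IsMinimalQuasiSection f A) :
    A ⊆ minimalUnion f := by
  intro x hx
  by_contra hxM
  have hMfc : IsOpen (minimalUnion f)ᶜ := isClosed_closure.isOpen_compl
  obtain ⟨t, htn, htc, hts⟩ := exists_mem_nhds_isClosed_subset (hMfc.mem_nhds hxM)
  set V := interior t with hV
  have hxV : x ∈ V := mem_interior_iff_mem_nhds.mpr htn
  set B := A \ V with hB
  have hQS : IsQuasiSection f B := by
    refine ⟨hA.1.1.sdiff isOpen_interior, ?_⟩
    intro U hU hBU
    have hAU : A ⊆ U ∪ V := by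
      intro a ha
      by_cases h : a ∈ V
      · exact Or.inr h
      · exact Or.inl (hBU ⟨ha, h⟩)
    have hO : orbitSetZ f (U ∪ V) = Set.univ := hA.1.2 _ (hU.union isOpen_interior) hAU
    have hmeet : ∀ M : Set X, IsMinimalSet f M → (M ∩ U).Nonempty := by
      intro M hM
      obtain ⟨m, hm⟩ := hM.1
      have hMsub : M ⊆ minimalUnion f := (subset_sUnion_of_mem hM).trans subset_closure
      have hmo : m ∈ orbitSetZ f (U ∪ V) := hO ▸ mem_univ m
      obtain ⟨n, u, hu, hum⟩ := by
        simpa only [orbitSetZ, mem_iUnion, mem_image] using hmo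
      have humem : u ∈ M := by
        have h1 := zpow_image_eq f hM.2.2.1 (-n)
        have h2 : (f.toEquiv ^ (-n)) m ∈ M := h1 ▸ ⟨m, hm, rfl⟩
        have h3 : (f.toEquiv ^ (-n)) m = u := by
          rw [← hum]
          simp [← Equiv.Perm.mul_apply, ← zpow_add]
        rwa [h3] at h2
      refine ⟨u, humem, ?_⟩
      rcases hu with h | h
      · exact h
      · exact absurd (hMsub humem) (hts (interior_subset h))
    apply eq_univ_of_forall
    intro y
    obtain ⟨M, hMsub, hMmin⟩ := exists_minimal_subset f (closure (orbitZ f y))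
      ⟨y, subset_closure ⟨0, by simp⟩⟩ isClosed_closure
      (by rw [f.image_closure, orbitZ_invariant])
    obtain ⟨m, hmM, hmU⟩ := hmeet M hMmin
    obtain ⟨z, hzU, n, hzn⟩ := mem_closure_iff.mp (hMsub hmM) U hU hmU
    refine mem_iUnion.mpr ⟨-n, z, hzU, ?_⟩
    rw [← hzn]
    simp [← Equiv.Perm.mul_apply, ← zpow_add]
  have hBA := hA.2 B hQS diff_subset
  rw [← hBA] at hx
  exact hx.2 hxV
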